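/- Let p : Fin n → ℝ be strictly increasing with weights w(u,s) = |p u - p s| on the complete graph on Fin n. Run Prim's (greedy) algorithm starting from any vertex: at each step, add the minimum-weight edge connecting the current tree to a new vertex. Then at every step, the newly added edge connects two vertices that are consecutive in the p-ordering among the vertices considered, and the final tree is the path v_1 — v_2 — ... — v_n in sorted order of p. -/
import Mathlib


/-- `u` and `v` are consecutive in the `p`-ordering: `p u < p v` with no value
strictly in between. -/
def Consec {n : ℕ} (p : Fin n → ℝ) (u v : Fin n) : Prop :=
  p u < p v ∧ ∀ g, ¬ (p u < p g ∧ p g < p v)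

lemma no_between {n : ℕ} (p : Fin (n + 1) → ℝ) (hp : StrictMono p)
    {u v : Fin (n + 1)} (h : (u : ℕ) + 1 = v) :
    ∀ g, ¬ (p u < p g ∧ p g < p v) := by
  rintro g ⟨h1, h2⟩
  rw [hp.lt_iff_lt, Fin.lt_def] at h1 h2
  omega

lemma consec_of_adj {n : ℕ} (p : Fin (n + 1) → ℝ) (hp : StrictMono p)
    {u v : Fin (n + 1)} (h : (u : ℕ) + 1 = v) : Consec p u v :=
  ⟨hp (by rw [Fin.lt_def]; omega), no_between p hp h⟩

lemma step_lemma {n : ℕ} (p : Fin (n + 1) → ℝ) (hp : StrictMono p)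
    (S : ℕ → Finset (Fin (n + 1))) (e : ℕ → Fin (n + 1) × Fin (n + 1))
    (t : ℕ) (hu : (e t).1 ∈ S t) (hv : (e t).2 ∉ S t)
    (hins : S (t + 1) = insert (e t).2 (S t))
    (hmin : ∀ u' ∈ S t, ∀ v', v' ∉ S t → |p (e t).1 - p (e t).2| ≤ |p u' - p v'|)
    (a b : Fin (n + 1)) (hab : a ≤ b) (hSt : S t = Finset.Icc a b) :
    (∃ a' : Fin (n + 1), (a' : ℕ) + 1 = a ∧ e t = (a, a') ∧
        S (t + 1) = Finset.Icc a' b) ∨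
    (∃ b' : Fin (n + 1), (b : ℕ) + 1 = b' ∧ e t = (b, b') ∧
        S (t + 1) = Finset.Icc a b') := by
  rw [hSt] at hu hv hmin hins
  rw [Fin.le_def] at hab
  rw [Finset.mem_Icc, Fin.le_def, Fin.le_def] at hu
  have hv' : ¬ ((a : ℕ) ≤ (e t).2 ∧ ((e t).2 : ℕ) ≤ b) := by
    intro h
    exact hv (Finset.mem_Icc.mpr ⟨Fin.le_def.mpr h.1, Fin.le_def.mpr h.2⟩)
  rcases lt_or_ge ((e t).2 : ℕ) (a : ℕ) with hva | hge
  · -- new vertex is below a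
    left
    have ha1 : 1 ≤ (a : ℕ) := by omega
    set a' : Fin (n + 1) := ⟨(a : ℕ) - 1, by omega⟩ with ha'def
    have ha'v : (a' : ℕ) = (a : ℕ) - 1 := rfl
    have ha'notin : a' ∉ Finset.Icc a b := by
      rw [Finset.mem_Icc, Fin.le_def, Fin.le_def]
      omega
    have hamem : a ∈ Finset.Icc a b := Finset.mem_Icc.mpr ⟨le_refl a, Fin.le_def.mpr hab⟩
    have key := hmin a hamem a' ha'notin
    have h1 : p (e t).2 ≤ p a' := hp.le_iff_le.mpr (Fin.le_def.mpr (by omega))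
    have h2 : p a' < p a := hp (Fin.lt_def.mpr (by omega))
    have h3 : p a ≤ p (e t).1 := hp.le_iff_le.mpr (Fin.le_def.mpr hu.1)
    rw [abs_of_pos (by linarith), abs_of_pos (by linarith)] at key
    have he1 : (e t).1 = a := hp.injective (by linarith)
    have he2 : (e t).2 = a' := hp.injective (by linarith)
    refine ⟨a', by omega, ?_, ?_⟩
    · exact Prod.ext he1 he2
    · rw [hins, he2]
      ext x
      simp only [Finset.mem_insert, Finset.mem_Icc, Fin.le_def, Fin.ext_iff, ha'v]
      omega
  · -- new vertex is above b
    right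
    have hbv : (b : ℕ) < (e t).2 := by omega
    have hb1 : (b : ℕ) + 1 ≤ n := by have := (e t).2.isLt; omega
    set b' : Fin (n + 1) := ⟨(b : ℕ) + 1, by omega⟩ with hb'def
    have hb'v : (b' : ℕ) = (b : ℕ) + 1 := rfl
    have hb'notin : b' ∉ Finset.Icc a b := by
      rw [Finset.mem_Icc, Fin.le_def, Fin.le_def]
      omega
    have hbmem : b ∈ Finset.Icc a b := Finset.mem_Icc.mpr ⟨Fin.le_def.mpr hab, le_refl b⟩
    have key := hmin b hbmem b' hb'notin
    have h1 : p b' ≤ p (e t).2 := hp.le_iff_le.mpr (Fin.le_def.mpr (by omega))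
    have h2 : p b < p b' := hp (Fin.lt_def.mpr (by omega))
    have h3 : p (e t).1 ≤ p b := hp.le_iff_le.mpr (Fin.le_def.mpr hu.2)
    rw [abs_sub_comm (p (e t).1), abs_sub_comm (p b), abs_of_pos (by linarith),
      abs_of_pos (by linarith)] at key
    have he1 : (e t).1 = b := hp.injective (by linarith)
    have he2 : (e t).2 = b' := hp.injective (by linarith)
    refine ⟨b', by omega, ?_, ?_⟩
    · exact Prod.ext he1 he2
    · rw [hins, he2]
      ext x
      simp only [Finset.mem_insert, Finset.mem_Icc, Fin.le_def, Fin.ext_iff, hb'v]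
      omega

lemma interval_lemma {n : ℕ} (p : Fin (n + 1) → ℝ) (hp : StrictMono p)
    (v0 : Fin (n + 1)) (S : ℕ → Finset (Fin (n + 1)))
    (e : ℕ → Fin (n + 1) × Fin (n + 1))
    (hS0 : S 0 = {v0})
    (hstep : ∀ t < n, (e t).1 ∈ S t ∧ (e t).2 ∉ S t ∧
      S (t + 1) = insert (e t).2 (S t) ∧
      ∀ u' ∈ S t, ∀ v', v' ∉ S t → |p (e t).1 - p (e t).2| ≤ |p u' - p v'|) :
    ∀ t, t ≤ n → ∃ a b : Fin (n + 1), (a : ℕ) + t = b ∧ S t = Finset.Icc a b ∧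
      (∀ u v : Fin (n + 1), u ∈ S t → v ∈ S t → (u : ℕ) + 1 = v →
        ∃ s < t, e s = (u, v) ∨ e s = (v, u)) := by
  intro t
  induction t with
  | zero =>
    intro _
    refine ⟨v0, v0, by omega, by rw [hS0, Finset.Icc_self], ?_⟩
    intro u v huS hvS huv
    rw [hS0, Finset.mem_singleton] at huS hvS
    subst huS; subst hvS
    omega
  | succ t ih =>
    intro ht
    obtain ⟨a, b, hab, hSt, hcov⟩ := ih (by omega)
    obtain ⟨hu, hvn, hins, hmin⟩ := hstep t (by omega)
    rcases step_lemma p hp S e t hu hvn hins hmin a b (Fin.le_def.mpr (by omega)) hSt with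
      ⟨a', ha', he, hS1⟩ | ⟨b', hb', he, hS1⟩
    · refine ⟨a', b, by omega, hS1, ?_⟩
      intro u v huS hvS huv
      rw [hS1, Finset.mem_Icc, Fin.le_def, Fin.le_def] at huS hvS
      rcases lt_or_ge (u : ℕ) (a : ℕ) with hlt | hle
      · -- u = a', v = a, this is edge e t
        have hu' : u = a' := Fin.ext (by omega)
        have hv' : v = a := Fin.ext (by omega)
        exact ⟨t, by omega, Or.inr (by rw [hu', hv', he])⟩
      · have huSt : u ∈ S t := by
          rw [hSt, Finset.mem_Icc, Fin.le_def, Fin.le_def]; omega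
        have hvSt : v ∈ S t := by
          rw [hSt, Finset.mem_Icc, Fin.le_def, Fin.le_def]; omega
        obtain ⟨s, hs, hor⟩ := hcov u v huSt hvSt huv
        exact ⟨s, by omega, hor⟩
    · refine ⟨a, b', by omega, hS1, ?_⟩
      intro u v huS hvS huv
      rw [hS1, Finset.mem_Icc, Fin.le_def, Fin.le_def] at huS hvS
      rcases lt_or_ge (b : ℕ) (v : ℕ) with hlt | hle
      · have hv' : v = b' := Fin.ext (by omega)
        have hu' : u = b := Fin.ext (by omega)
        exact ⟨t, by omega, Or.inl (by rw [hu', hv', he])⟩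
      · have huSt : u ∈ S t := by
          rw [hSt, Finset.mem_Icc, Fin.le_def, Fin.le_def]; omega
        have hvSt : v ∈ S t := by
          rw [hSt, Finset.mem_Icc, Fin.le_def, Fin.le_def]; omega
        obtain ⟨s, hs, hor⟩ := hcov u v huSt hvSt huv
        exact ⟨s, by omega, hor⟩

/-- Running Prim's greedy algorithm on the complete graph with
weights `|p u - p s|` (for strictly increasing `p` on `n+1` vertices): every
added edge connects two vertices consecutive in the `p`-ordering among the
vertices considered so far, and the final tree is exactly the sorted path. -/
theorem stmt_18 (n : ℕ) (p : Fin (n + 1) → ℝ) (hp : StrictMono p)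
    (v0 : Fin (n + 1)) (S : ℕ → Finset (Fin (n + 1)))
    (e : ℕ → Fin (n + 1) × Fin (n + 1))
    (hS0 : S 0 = {v0})
    (hstep : ∀ t < n, (e t).1 ∈ S t ∧ (e t).2 ∉ S t ∧
      S (t + 1) = insert (e t).2 (S t) ∧
      ∀ u' ∈ S t, ∀ v', v' ∉ S t → |p (e t).1 - p (e t).2| ≤ |p u' - p v'|) :
    (∀ t < n, ∀ g ∈ S (t + 1),
      ¬ (p (e t).1 < p g ∧ p g < p (e t).2) ∧
      ¬ (p (e t).2 < p g ∧ p g < p (e t).1)) ∧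
    S n = Finset.univ ∧
    (∀ u v : Fin (n + 1),
      (∃ t < n, e t = (u, v) ∨ e t = (v, u)) ↔ (Consec p u v ∨ Consec p v u)) := by
  have hIL := interval_lemma p hp v0 S e hS0 hstep
  -- the per-step edge characterization
  have hchar : ∀ t < n,
      (∃ a' : Fin (n + 1), (a' : ℕ) + 1 = ((e t).1 : ℕ) ∧ (e t).2 = a') ∨
      (∃ b' : Fin (n + 1), ((e t).1 : ℕ) + 1 = (b' : ℕ) ∧ (e t).2 = b') := by
    intro t ht
    obtain ⟨a, b, hab, hSt, _⟩ := hIL t (by omega)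
    obtain ⟨hu, hvn, hins, hmin⟩ := hstep t ht
    rcases step_lemma p hp S e t hu hvn hins hmin a b (Fin.le_def.mpr (by omega)) hSt with
      ⟨a', ha', he, _⟩ | ⟨b', hb', he, _⟩
    · exact Or.inl ⟨a', by rw [he]; exact ha', by rw [he]⟩
    · exact Or.inr ⟨b', by rw [he]; exact hb', by rw [he]⟩
  -- S n = univ
  have hSn : S n = Finset.univ := by
    obtain ⟨a, b, hab, hSn, _⟩ := hIL n le_rfl
    have hbn := b.isLt
    rw [hSn]
    ext x
    simp only [Finset.mem_Icc, Fin.le_def, Finset.mem_univ, iff_true]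
    have := x.isLt
    omega
  refine ⟨?_, hSn, ?_⟩
  · intro t ht g _
    rcases hchar t ht with ⟨a', ha', he2⟩ | ⟨b', hb', he2⟩
    · constructor
      · rintro ⟨h1, h2⟩
        rw [he2] at h2
        have : p a' < p (e t).1 := hp (Fin.lt_def.mpr (by omega))
        linarith
      · rw [he2]
        exact no_between p hp ha' g
    · constructor
      · rw [he2]
        exact no_between p hp hb' g
      · rintro ⟨h1, h2⟩
        rw [he2] at h1
        have : p (e t).1 < p b' := hp (Fin.lt_def.mpr (by omega))
        linarith
  · intro u v
    constructor
    · rintro ⟨t, ht, h | h⟩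
      · rcases hchar t ht with ⟨a', ha', he2⟩ | ⟨b', hb', he2⟩
        · rw [h] at ha' he2; simp only at ha' he2; subst he2
          exact Or.inr (consec_of_adj p hp ha')
        · rw [h] at hb' he2; simp only at hb' he2; subst he2
          exact Or.inl (consec_of_adj p hp hb')
      · rcases hchar t ht with ⟨a', ha', he2⟩ | ⟨b', hb', he2⟩
        · rw [h] at ha' he2; simp only at ha' he2; subst he2
          exact Or.inl (consec_of_adj p hp ha')
        · rw [h] at hb' he2; simp only at hb' he2; subst he2
          exact Or.inr (consec_of_adj p hp hb')
    · have key : ∀ x y : Fin (n + 1), Consec p x y →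
          ∃ t < n, e t = (x, y) ∨ e t = (y, x) := by
        rintro x y ⟨hxy, hng⟩
        have hlt : (x : ℕ) < (y : ℕ) := Fin.lt_def.mp (hp.lt_iff_lt.mp hxy)
        have hadj : (x : ℕ) + 1 = y := by
          by_contra hc
          have h1 : (x : ℕ) + 1 < y := by omega
          have hgy := y.isLt
          refine hng ⟨(x : ℕ) + 1, by omega⟩ ⟨?_, ?_⟩
          · exact hp (Fin.lt_def.mpr (by simp))
          · exact hp (Fin.lt_def.mpr (by simpa using h1))
        obtain ⟨a, b, hab, hSnI, hcov⟩ := hIL n le_rfl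
        have hx : x ∈ S n := by rw [hSn]; exact Finset.mem_univ x
        have hy : y ∈ S n := by rw [hSn]; exact Finset.mem_univ y
        exact hcov x y hx hy hadj
      rintro (h | h)
      · exact key u v h
      · obtain ⟨t, ht, hor⟩ := key v u h
        exact ⟨t, ht, hor.symm⟩
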